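/- Let (X,G) be a graph with uniformly bounded degrees and 𝒞 a cutset of G with uniformly bounded boundaries, i.e., r := sup_{C∈𝒞} diam_G(∂iv C) < ∞. Then sup_{x∈X} |{C ∈ 𝒞 : x ∈ ∂iv C}| < ∞, i.e., there is N ∈ ℕ such that every vertex x lies in the inner vertex boundary of at most N cuts of 𝒞. -/

import Mathlib

open Set

/-- A *walk* of length `n` in the (directed presentation of the) edge set `E`. -/
def IsWalk {α : Type*} (E : Set (α × α)) (f : ℕ → α) (n : ℕ) : Prop :=
  ∀ i < n, (f i, f (i + 1)) ∈ E

/-- Two points are joined by an `E`-path. -/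
def Reach {α : Type*} (E : Set (α × α)) (x y : α) : Prop :=
  ∃ (n : ℕ) (f : ℕ → α), f 0 = x ∧ f n = y ∧ IsWalk E f n

/-- The extended path metric `d_E` of a graph, with values in `ℕ∞` (`∞` if no path exists). -/
noncomputable def graphDist {α : Type*} (E : Set (α × α)) (x y : α) : ℕ∞ :=
  sInf {d : ℕ∞ | ∃ (n : ℕ) (f : ℕ → α), d = (n : ℕ∞) ∧ f 0 = x ∧ f n = y ∧ IsWalk E f n}

/-- A graph is *acyclic* if it has no injective cycle (of length at least 3,
i.e. not doubling back along a single edge). -/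
def Acyclic {α : Type*} (E : Set (α × α)) : Prop :=
  ¬ ∃ (f : ℕ → α) (n : ℕ), 3 ≤ n ∧ IsWalk E f n ∧ f n = f 0 ∧
      ∀ i j, i < n → j < n → f i = f j → i = j

/-- `E` is (the directed presentation of) a graph: symmetric and irreflexive. -/
def IsGraph {α : Type*} (E : Set (α × α)) : Prop :=
  (∀ p ∈ E, (p.2, p.1) ∈ E) ∧ ∀ x : α, (x, x) ∉ E

/-- `(α, E)` has uniformly bounded degrees. -/
def BddDeg {α : Type*} (E : Set (α × α)) : Prop :=
  ∃ d : ℕ, ∀ x : α, {y | (x, y) ∈ E}.encard ≤ (d : ℕ∞)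

/-- The `E_G`-class (connected component) of `x`. -/
def cls {α : Type*} (E : Set (α × α)) (x : α) : Set α := {y | Reach E x y}

/-- The complement `C̄ = ω ∖ C` of `C` inside the `E_G`-class(es) of its points. -/
def cCompl {α : Type*} (E : Set (α × α)) (C : Set α) : Set α :=
  {y | y ∉ C ∧ ∃ x ∈ C, Reach E x y}

/-- Inner vertex boundary `∂iv C` of a subset `C` of an `E_G`-class. -/
def innerB {α : Type*} (E : Set (α × α)) (C : Set α) : Set α :=
  {x | x ∈ C ∧ ∃ y, y ∉ C ∧ (x, y) ∈ E}

/-- Outer vertex boundary `∂ov C = ∂iv C̄` of a subset `C` of an `E_G`-class. -/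
def outerB {α : Type*} (E : Set (α × α)) (C : Set α) : Set α :=
  {y | y ∉ C ∧ ∃ x ∈ C, (y, x) ∈ E}

/-- Outer edge boundary `∂oe C = (C × C̄) ∩ E` of a subset `C` of an `E_G`-class. -/
def outerEdgeB {α : Type*} (E : Set (α × α)) (C : Set α) : Set (α × α) :=
  {p | p ∈ E ∧ p.1 ∈ C ∧ p.2 ∉ C}

/-- A *cut* of a graph: a nonempty proper subset of an `E_G`-class with finite
edge boundary. -/
def IsCut {α : Type*} (E : Set (α × α)) (C : Set α) : Prop :=
  (∃ x₀, x₀ ∈ C ∧ C ⊆ cls E x₀ ∧ C ≠ cls E x₀) ∧ (outerEdgeB E C).Finite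

/-- `diam_E(A)`, with values in `ℕ∞`. -/
noncomputable def gdiam {α : Type*} (E : Set (α × α)) (A : Set α) : ℕ∞ :=
  ⨆ x ∈ A, ⨆ y ∈ A, graphDist E x y

/-- `C` and `D` lie on the same `E_G`-class. -/
def SameClass {α : Type*} (E : Set (α × α)) (C D : Set α) : Prop :=
  ∃ x ∈ C, ∃ y ∈ D, Reach E x y

/-- `C` and `D` are *nested* with each other (complements taken within the class). -/
def NestedPair {α : Type*} (E : Set (α × α)) (C D : Set α) : Prop :=
  C ∩ D = ∅ ∨ C ∩ cCompl E D = ∅ ∨ cCompl E C ∩ D = ∅ ∨ cCompl E C ∩ cCompl E D = ∅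
section Aux

variable {α : Type*}

/-- The ball of radius `k` around `x`: points reachable by a walk of length `≤ k`. -/
def gball (E : Set (α × α)) (x : α) (k : ℕ) : Set α :=
  {y | ∃ n ≤ k, ∃ f : ℕ → α, f 0 = x ∧ f n = y ∧ IsWalk E f n}

lemma gball_mono {E : Set (α × α)} {x : α} {k l : ℕ} (h : k ≤ l) :
    gball E x k ⊆ gball E x l := by
  rintro y ⟨n, hn, f, h0, hn', hw⟩
  exact ⟨n, hn.trans h, f, h0, hn', hw⟩

lemma gball_succ_of_edge {E : Set (α × α)} {x y z : α} {k : ℕ}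
    (hy : y ∈ gball E x k) (he : (y, z) ∈ E) : z ∈ gball E x (k + 1) := by
  obtain ⟨n, hn, f, h0, hn', hw⟩ := hy
  refine ⟨n + 1, by omega, fun i => if i ≤ n then f i else z, by simp [h0], by simp, ?_⟩
  intro i hi
  rcases Nat.lt_or_ge i n with h | h
  · simp only [if_pos (by omega : i ≤ n), if_pos (by omega : i + 1 ≤ n)]
    exact hw i h
  · have hin : i = n := by omega
    simp only [hin, if_pos le_rfl, if_neg (show ¬ n + 1 ≤ n by omega), hn']
    exact he

lemma mem_gball_of_dist_le {E : Set (α × α)} {x y : α} {k : ℕ}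
    (h : graphDist E x y ≤ (k : ℕ∞)) : y ∈ gball E x k := by
  by_contra hy
  have h1 : ((k + 1 : ℕ) : ℕ∞) ≤ graphDist E x y := by
    apply le_sInf
    rintro d ⟨n, f, rfl, h0, hn, hw⟩
    rw [Nat.cast_le]
    by_contra hlt
    exact hy ⟨n, by omega, f, h0, hn, hw⟩
  have h2 : ((k + 1 : ℕ) : ℕ∞) ≤ (k : ℕ∞) := h1.trans h
  rw [Nat.cast_le] at h2
  omega

lemma Reach.trans' {E : Set (α × α)} {x y z : α} (h1 : Reach E x y) (h2 : Reach E y z) :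
    Reach E x z := by
  obtain ⟨n, f, hf0, hfn, hfw⟩ := h1
  obtain ⟨m, g, hg0, hgm, hgw⟩ := h2
  refine ⟨n + m, fun i => if i ≤ n then f i else g (i - n), by simp [hf0], ?_, ?_⟩
  · rcases Nat.eq_zero_or_pos m with hm | hm
    · subst hm; simp [hfn, ← hg0, hgm]
    · simp only [if_neg (by omega : ¬ n + m ≤ n)]
      rw [show n + m - n = m by omega, hgm]
  · intro i hi
    rcases Nat.lt_or_ge i n with h | h
    · simp only [if_pos (by omega : i ≤ n), if_pos (by omega : i + 1 ≤ n)]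
      exact hfw i h
    · have e1 : (if i ≤ n then f i else g (i - n)) = g (i - n) := by
        rcases Nat.eq_or_lt_of_le h with h' | h'
        · simp [← h', hfn, ← hg0]
        · simp [if_neg (by omega : ¬ i ≤ n)]
      show (if i ≤ n then f i else g (i - n), if i + 1 ≤ n then f (i + 1) else g (i + 1 - n)) ∈ E
      rw [e1, if_neg (show ¬ i + 1 ≤ n by omega), show i + 1 - n = (i - n) + 1 by omega]
      exact hgw (i - n) (by omega)

lemma Reach.symm' {E : Set (α × α)} (hE : IsGraph E) {x y : α} (h : Reach E x y) :
    Reach E y x := by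
  obtain ⟨n, f, hf0, hfn, hfw⟩ := h
  refine ⟨n, fun i => f (n - i), by simpa, by simpa, ?_⟩
  intro i hi
  have := hE.1 _ (hfw (n - i - 1) (by omega))
  simpa [show n - i - 1 + 1 = n - i by omega, show n - (i + 1) = n - i - 1 by omega] using this

lemma encard_biUnion_le' {β : Type*} {s : Set α} (hs : s.Finite) {t : α → Set β} {b : ℕ∞}
    (hb : ∀ i, (t i).encard ≤ b) : (⋃ i ∈ s, t i).encard ≤ s.encard * b := by
  refine Set.Finite.induction_on _ hs (by simp) ?_
  intro a s' ha hfin ih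
  rw [Set.biUnion_insert, Set.encard_insert_of_notMem ha, add_mul, one_mul]
  calc (t a ∪ ⋃ i ∈ s', t i).encard ≤ (t a).encard + (⋃ i ∈ s', t i).encard :=
        Set.encard_union_le _ _
    _ ≤ b + s'.encard * b := add_le_add (hb a) ih
    _ = s'.encard * b + b := add_comm _ _

lemma gball_encard {E : Set (α × α)} {d : ℕ}
    (hdeg : ∀ x : α, {y | (x, y) ∈ E}.encard ≤ (d : ℕ∞)) (x : α) (k : ℕ) :
    (gball E x k).encard ≤ (((d + 1) ^ k : ℕ) : ℕ∞) := by
  induction k with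
  | zero =>
      have : gball E x 0 ⊆ {x} := by
        rintro y ⟨n, hn, f, h0, hn', hw⟩
        interval_cases n
        simp [← h0, hn']
      simpa using (Set.encard_le_encard this).trans (by simp)
  | succ k ih =>
      have hsub : gball E x (k + 1) ⊆ ⋃ u ∈ gball E x k, insert u {y | (u, y) ∈ E} := by
        rintro y ⟨n, hn, f, h0, hn', hw⟩
        rcases Nat.lt_or_ge n (k + 1) with h | h
        · exact Set.mem_biUnion ⟨n, by omega, f, h0, hn', hw⟩ (Set.mem_insert _ _)
        · have hn'' : n = k + 1 := by omega
          subst hn''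
          refine Set.mem_biUnion (⟨k, le_rfl, f, h0, rfl, fun i hi => hw i (by omega)⟩ :
            f k ∈ gball E x k) ?_
          exact Set.mem_insert_iff.mpr (Or.inr (by rw [← hn']; exact hw k (by omega)))
      have hfink : (gball E x k).Finite := Set.finite_of_encard_le_coe ih
      have hpiece : ∀ u : α, (insert u {y | (u, y) ∈ E}).encard ≤ ((d : ℕ∞) + 1) := by
        intro u
        exact (Set.encard_insert_le _ _).trans (add_le_add (hdeg u) le_rfl)
      calc (gball E x (k + 1)).encard
          ≤ (⋃ u ∈ gball E x k, insert u {y | (u, y) ∈ E}).encard := Set.encard_le_encard hsub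
        _ ≤ (gball E x k).encard * ((d : ℕ∞) + 1) := encard_biUnion_le' hfink hpiece
        _ ≤ (((d + 1) ^ k : ℕ) : ℕ∞) * ((d + 1 : ℕ) : ℕ∞) := by
            push_cast
            exact mul_le_mul' ih le_rfl
        _ = (((d + 1) ^ (k + 1) : ℕ) : ℕ∞) := by push_cast; ring

lemma encard_subsets_le {B : Set α} (hB : B.Finite) :
    {t : Set α | t ⊆ B}.encard ≤ ((2 ^ B.ncard : ℕ) : ℕ∞) := by
  refine Set.Finite.induction_on _ hB (by simp [Set.subset_empty_iff]) ?_
  intro a s ha hfin ih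
  have hsub : {t : Set α | t ⊆ insert a s} ⊆
      {t : Set α | t ⊆ s} ∪ (insert a) '' {t : Set α | t ⊆ s} := by
    intro t ht
    by_cases hat : a ∈ t
    · right
      refine ⟨t \ {a}, fun z hz => ?_, by simp [Set.insert_diff_singleton,
        Set.insert_eq_of_mem hat]⟩
      rcases ht hz.1 with h | h
      · exact absurd h hz.2
      · exact h
    · left
      intro z hz
      rcases ht hz with h | h
      · exact absurd (h ▸ hz) hat
      · exact h
  calc {t : Set α | t ⊆ insert a s}.encard
      ≤ ({t : Set α | t ⊆ s} ∪ (insert a) '' {t : Set α | t ⊆ s}).encard :=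
        Set.encard_le_encard hsub
    _ ≤ {t : Set α | t ⊆ s}.encard + ((insert a) '' {t : Set α | t ⊆ s}).encard :=
        Set.encard_union_le _ _
    _ ≤ ((2 ^ s.ncard : ℕ) : ℕ∞) + ((2 ^ s.ncard : ℕ) : ℕ∞) :=
        add_le_add ih ((Set.encard_image_le _ _).trans ih)
    _ = ((2 ^ (insert a s).ncard : ℕ) : ℕ∞) := by
        rw [Set.ncard_insert_of_notMem ha hfin]
        push_cast
        ring

end Aux

/-- For a bounded-degree graph `(X,G)` and a cutset `𝒞` with uniformly
bounded boundaries (`diam_G(∂iv C) ≤ r` for all `C ∈ 𝒞`), every vertex lies in the inner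
vertex boundary of a uniformly bounded number of cuts of `𝒞`. -/
theorem bdd_many_cuts_through_a_point {X : Type*} (G : Set (X × X))
    (hG : IsGraph G) (hdeg : BddDeg G)
    (𝒞 : Set (Set X)) (hcut : ∀ C ∈ 𝒞, IsCut G C)
    (r : ℕ) (hbdd : ∀ C ∈ 𝒞, gdiam G (innerB G C) ≤ (r : ℕ∞)) :
    ∃ N : ℕ, ∀ x : X, {C | C ∈ 𝒞 ∧ x ∈ innerB G C}.encard ≤ (N : ℕ∞) := by
  obtain ⟨d, hd⟩ := hdeg
  refine ⟨2 ^ ((d + 1) ^ (r + 1)), fun x => ?_⟩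
  set B := gball G x (r + 1) with hB
  have hBcard : B.encard ≤ (((d + 1) ^ (r + 1) : ℕ) : ℕ∞) := gball_encard hd x (r + 1)
  have hBfin : B.Finite := Set.finite_of_encard_le_coe hBcard
  have hbnd : ∀ C ∈ 𝒞, x ∈ innerB G C → innerB G C ⊆ gball G x r := by
    intro C hC hx u hu
    apply mem_gball_of_dist_le
    refine le_trans ?_ (hbdd C hC)
    calc graphDist G x u
        ≤ ⨆ y ∈ innerB G C, graphDist G x y :=
          le_iSup₂ (f := fun y (_ : y ∈ innerB G C) => graphDist G x y) u hu
      _ ≤ gdiam G (innerB G C) :=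
          le_iSup₂ (f := fun a (_ : a ∈ innerB G C) => ⨆ y ∈ innerB G C, graphDist G a y) x hx
  have cross : ∀ C ∈ 𝒞, x ∈ innerB G C → ∀ u v : X, (u, v) ∈ G → v ∉ B → (u ∈ C ↔ v ∈ C) := by
    intro C hC hx u v huv hv
    constructor
    · intro hu
      by_contra hv'
      exact hv (gball_succ_of_edge (hbnd C hC hx ⟨hu, v, hv', huv⟩) huv)
    · intro hvC
      by_contra hu
      have hvb : v ∈ innerB G C := ⟨hvC, u, hu, hG.1 _ huv⟩
      exact hv (gball_mono (by omega) (hbnd C hC hx hvb))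
  have key : ∀ C ∈ 𝒞, ∀ C' ∈ 𝒞, x ∈ innerB G C → x ∈ innerB G C' →
      C ∩ B = C' ∩ B → C ⊆ C' := by
    intro C hC C' hC' hx hx' hinter y hy
    obtain ⟨⟨x₀, hx₀, hsub, _⟩, _⟩ := hcut C hC
    have hxy : Reach G x y := Reach.trans' (Reach.symm' hG (hsub hx.1)) (hsub hy)
    obtain ⟨n, f, hf0, hfn, hw⟩ := hxy
    have main : ∀ i, i ≤ n → (f i ∈ C ↔ f i ∈ C') := by
      intro i
      induction i with
      | zero => intro _; rw [hf0]; exact iff_of_true hx.1 hx'.1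
      | succ i ih =>
          intro hin
          have hi := ih (by omega)
          have hedge := hw i (by omega)
          by_cases hb : f (i + 1) ∈ B
          · have h2 : f (i + 1) ∈ C ∩ B ↔ f (i + 1) ∈ C' ∩ B := by rw [hinter]
            simpa [hb] using h2
          · rw [← cross C hC hx _ _ hedge hb, ← cross C' hC' hx' _ _ hedge hb]
            exact hi
    have hyn := (main n le_rfl).mp (by rwa [hfn])
    rwa [hfn] at hyn
  have hinj : Set.InjOn (fun C => C ∩ B) {C | C ∈ 𝒞 ∧ x ∈ innerB G C} := by
    intro C hCm C' hC'm heq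
    exact Set.Subset.antisymm (key C hCm.1 C' hC'm.1 hCm.2 hC'm.2 heq)
      (key C' hC'm.1 C hCm.1 hC'm.2 hCm.2 heq.symm)
  have himg : (fun C => C ∩ B) '' {C | C ∈ 𝒞 ∧ x ∈ innerB G C} ⊆ {t : Set X | t ⊆ B} := by
    rintro t ⟨C, _, rfl⟩
    exact Set.inter_subset_right
  have hn : B.ncard ≤ (d + 1) ^ (r + 1) := by
    rwa [← hBfin.cast_ncard_eq, Nat.cast_le] at hBcard
  calc {C | C ∈ 𝒞 ∧ x ∈ innerB G C}.encard
      = ((fun C => C ∩ B) '' {C | C ∈ 𝒞 ∧ x ∈ innerB G C}).encard := hinj.encard_image.symm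
    _ ≤ {t : Set X | t ⊆ B}.encard := Set.encard_le_encard himg
    _ ≤ ((2 ^ B.ncard : ℕ) : ℕ∞) := encard_subsets_le hBfin
    _ ≤ ((2 ^ ((d + 1) ^ (r + 1)) : ℕ) : ℕ∞) := by
        rw [Nat.cast_le]
        exact Nat.pow_le_pow_right (by omega) hn
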